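/- Let Q_d ⊂ ℝⁿ be a cube of edge d and let P_F : ℝⁿ → [0,1] be a function with P_F = 1 on a compact set F, ∫_{ℝⁿ}|∇P_F|² dx = cap(F), and such that u = (1 − P_F)ω where ω is smooth on Q_d ∖ e (e ⊂ Int F compact) with |ω| = 1. Then h_{a,V}(u,u)_{Q_d} ≤ cap(F) + ∫_{Q_d ∖ F} (|∇ω/(iω) + a|² + V) dx, where h_{a,V}(u,u)_{Q_d} = ∫_{Q_d}(|∇u + iau|² + V|u|²) dx. -/

import Mathlib

open MeasureTheory

section AuxLemmas

lemma ae_fderiv_eq_zero_of_eqOn_zero {n : ℕ} {s : Set (Fin n → ℝ)} {g : (Fin n → ℝ) → ℝ}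
    (hs : MeasurableSet s) (hg0 : ∀ x ∈ s, g x = 0)
    (hdiff : ∀ x ∈ s, DifferentiableAt ℝ g x) :
    ∀ᵐ x ∂(volume.restrict s), fderiv ℝ g x = 0 := by
  rcases Nat.eq_zero_or_pos n with hn | hn
  · refine Filter.Eventually.of_forall fun x => ?_
    ext v
    have : v = 0 := by subst hn; exact Subsingleton.elim v 0
    simp [this]
  · set L : ℝ →L[ℝ] (Fin n → ℝ) := ContinuousLinearMap.pi (fun _ => ContinuousLinearMap.id ℝ ℝ)
    set f : (Fin n → ℝ) → (Fin n → ℝ) := fun x => L (g x) with hf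
    have hA : ApproximatesLinearOn f (0 : (Fin n → ℝ) →L[ℝ] (Fin n → ℝ)) s 0 := by
      intro x hx y hy
      simp [hf, hg0 x hx, hg0 y hy]
    have hf' : ∀ x ∈ s, HasFDerivWithinAt f (L.comp (fderiv ℝ g x)) s x := fun x hx =>
      (L.hasFDerivAt.comp x (hdiff x hx).hasFDerivAt).hasFDerivWithinAt
    have := hA.norm_fderiv_sub_le (μ := volume) hs (fun x => L.comp (fderiv ℝ g x)) hf'
    filter_upwards [this] with x hx
    have h0 : L.comp (fderiv ℝ g x) = 0 := by
      have : ‖L.comp (fderiv ℝ g x) - 0‖₊ = 0 := le_antisymm hx zero_le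
      simpa [sub_zero] using this
    ext v
    have := congrFun (congrArg (fun T => (T : (Fin n → ℝ) →L[ℝ] (Fin n → ℝ)) v) h0) ⟨0, hn⟩
    simpa [L] using this

lemma norm_sq_ofReal_add_I_mul (s t : ℝ) : ‖(s : ℂ) + Complex.I * (t : ℂ)‖ ^ 2 = s ^ 2 + t ^ 2 := by
  rw [Complex.sq_norm]
  simp [Complex.normSq_apply]
  ring

end AuxLemmas

/-- with `u = (1 − P_F)ω` where `P_F` is the equilibrium potential of `F`
(`0 ≤ P_F ≤ 1`, `P_F = 1` on `F`, `∫|∇P_F|² = cap(F)`), and `ω` smooth of modulus one on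
`Q ∖ e` (`e ⊆ Int F`), the localized magnetic form satisfies
`h_{a,V}(u,u)_{Q} ≤ cap(F) + ∫_{Q∖F} (|∇ω/(iω) + a|² + V) dx`. -/
theorem test_function_form_upper_bound {n : ℕ}
    (a : (Fin n → ℝ) → (Fin n → ℝ)) (V : (Fin n → ℝ) → ℝ) (hV0 : ∀ x, 0 ≤ V x)
    (Q F e : Set (Fin n → ℝ)) (hQm : MeasurableSet Q) (hFm : MeasurableSet F)
    (hFcomp : IsCompact F) (hFQ : F ⊆ Q) (he : e ⊆ interior F) (hecomp : IsCompact e)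
    (PF : (Fin n → ℝ) → ℝ) (hP0 : ∀ x, 0 ≤ PF x) (hP1 : ∀ x, PF x ≤ 1)
    (hPF : ∀ x ∈ F, PF x = 1)
    (hPdiff : ∀ x ∉ F, DifferentiableAt ℝ PF x)
    (capF : ℝ)
    (hcap : capF = ∫ x, ∑ j : Fin n, (fderiv ℝ PF x (Pi.single j 1)) ^ 2)
    (hcapInt : Integrable (fun x => ∑ j : Fin n, (fderiv ℝ PF x (Pi.single j 1)) ^ 2))
    (ω : (Fin n → ℝ) → ℂ) (hω1 : ∀ x ∈ Q \ e, ‖ω x‖ = 1)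
    (hωdiff : ∀ x ∈ Q \ e, DifferentiableAt ℝ ω x)
    (u : (Fin n → ℝ) → ℂ) (hu : ∀ x, u x = ((1 - PF x : ℝ) : ℂ) * ω x)
    (hRHSint : IntegrableOn (fun x =>
      (∑ j : Fin n, (((fderiv ℝ ω x (Pi.single j 1)) / (Complex.I * ω x)).re + a x j) ^ 2)
        + V x) (Q \ F)) :
    (∫ x in Q, ((∑ j : Fin n,
        ‖fderiv ℝ u x (Pi.single j 1) + Complex.I * (a x j) * u x‖ ^ 2)
      + V x * ‖u x‖ ^ 2)) ≤
    capF + ∫ x in Q \ F, ((∑ j : Fin n,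
        (((fderiv ℝ ω x (Pi.single j 1)) / (Complex.I * ω x)).re + a x j) ^ 2)
      + V x) := by
  classical
  have hu' : u = fun y => ((1 - PF y : ℝ) : ℂ) * ω y := funext hu
  subst hu'
  set uu : (Fin n → ℝ) → ℂ := fun y => ((1 - PF y : ℝ) : ℂ) * ω y with huu
  set g₁ : (Fin n → ℝ) → ℝ := fun x => ∑ j : Fin n, (fderiv ℝ PF x (Pi.single j 1)) ^ 2 with hg₁
  set g₂ : (Fin n → ℝ) → ℝ := fun x =>
    (∑ j : Fin n, (((fderiv ℝ ω x (Pi.single j 1)) / (Complex.I * ω x)).re + a x j) ^ 2) + V x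
    with hg₂
  have hQFm : MeasurableSet (Q \ F) := hQm.diff hFm
  have hQFe : Q \ F ⊆ Q \ e := fun x hx => ⟨hx.1, fun hxe => hx.2 (interior_subset (he hxe))⟩
  -- the squared-modulus function of ω, minus one
  set gsq : (Fin n → ℝ) → ℝ := fun y => (ω y).re * (ω y).re + (ω y).im * (ω y).im - 1 with hgsq
  have hgsq0 : ∀ x ∈ Q \ F, gsq x = 0 := by
    intro x hx
    have h1 : ‖ω x‖ = 1 := hω1 x (hQFe hx)
    have h2 : Complex.normSq (ω x) = 1 := by
      rw [Complex.normSq_eq_norm_sq, h1]; norm_num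
    simp only [Complex.normSq_apply] at h2
    simp [hgsq, h2]
  have hgsqdiff : ∀ x ∈ Q \ F, DifferentiableAt ℝ gsq x := by
    intro x hx
    have hω : DifferentiableAt ℝ ω x := hωdiff x (hQFe hx)
    have hre : DifferentiableAt ℝ (fun y => (ω y).re) x :=
      (Complex.reCLM.differentiableAt).comp x hω
    have him : DifferentiableAt ℝ (fun y => (ω y).im) x :=
      (Complex.imCLM.differentiableAt).comp x hω
    exact ((hre.mul hre).add (him.mul him)).sub_const 1
  have hae : ∀ᵐ x, x ∈ Q \ F → fderiv ℝ gsq x = 0 :=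
    (ae_restrict_iff' hQFm).mp (ae_fderiv_eq_zero_of_eqOn_zero hQFm hgsq0 hgsqdiff)
  -- the key pointwise bound
  have key : ∀ x, (x ∈ Q \ F → fderiv ℝ gsq x = 0) → x ∈ Q →
      ((∑ j : Fin n, ‖fderiv ℝ uu x (Pi.single j 1) + Complex.I * (a x j) * uu x‖ ^ 2)
        + V x * ‖uu x‖ ^ 2) ≤ g₁ x + (Q \ F).indicator g₂ x := by
    intro x hgx hxQ
    by_cases hxF : x ∈ F
    · -- on F : uu x = 0
      have hP1x : PF x = 1 := hPF x hxF
      have hux : uu x = 0 := by simp [huu, hP1x]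
      have hind : (Q \ F).indicator g₂ x = 0 :=
        Set.indicator_of_notMem (fun h => h.2 hxF) _
      rw [hind, add_zero, hux]
      simp only [mul_zero, add_zero, norm_zero]
      rw [zero_pow (by norm_num), mul_zero, add_zero]
      by_cases hxint : x ∈ interior F
      · have hev : uu =ᶠ[nhds x] fun _ => 0 := by
          filter_upwards [mem_interior_iff_mem_nhds.mp hxint] with y hyF
          simp [huu, hPF y hyF]
        have hg1 : (0:ℝ) ≤ g₁ x := Finset.sum_nonneg fun j _ => sq_nonneg _
        refine le_trans (le_of_eq ?_) hg1
        rw [hev.fderiv_eq]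
        simp
      · have hxQe : x ∈ Q \ e := ⟨hxQ, fun hxe => hxint (he hxe)⟩
        have hω1x : ‖ω x‖ = 1 := hω1 x hxQe
        have hωx0 : ω x ≠ 0 := by
          intro h; rw [h] at hω1x; simp at hω1x
        have hωd : DifferentiableAt ℝ ω x := hωdiff x hxQe
        by_cases hud : DifferentiableAt ℝ uu x
        · -- PF is differentiable at x since uu/ω is
          have hev : ∀ᶠ y in nhds x, ω y ≠ 0 := hωd.continuousAt.eventually_ne hωx0
          have heq : (fun y => uu y * (ω y)⁻¹) =ᶠ[nhds x] fun y => ((1 - PF y : ℝ) : ℂ) := by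
            filter_upwards [hev] with y hy
            exact mul_inv_cancel_right₀ hy _
          have hdiv : DifferentiableAt ℝ (fun y => ((1 - PF y : ℝ) : ℂ)) x :=
            ((hud.mul (hωd.inv hωx0)).congr_of_eventuallyEq heq.symm)
          have hPFd : DifferentiableAt ℝ PF x := by
            have h2 : DifferentiableAt ℝ (fun y => (((1 - PF y : ℝ) : ℂ)).re) x :=
              (Complex.reCLM.differentiableAt).comp x hdiv
            have h3 : (fun y => (((1 - PF y : ℝ) : ℂ)).re) = fun y => 1 - PF y := by
              funext y; simp
            rw [h3] at h2
            have h4 := (differentiableAt_const (1 : ℝ)).sub h2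
            simpa using h4
          -- product rule
          have h1 : HasFDerivAt (fun y => (1 : ℝ) - PF y) (0 - fderiv ℝ PF x) x :=
            (hasFDerivAt_const 1 x).sub hPFd.hasFDerivAt
          have h2 : HasFDerivAt (fun y => ((1 - PF y : ℝ) : ℂ))
              (Complex.ofRealCLM.comp (0 - fderiv ℝ PF x)) x :=
            (Complex.ofRealCLM.hasFDerivAt).comp x h1
          have hprod : HasFDerivAt uu
              (((1 - PF x : ℝ) : ℂ) • fderiv ℝ ω x
                + (ω x) • (Complex.ofRealCLM.comp (0 - fderiv ℝ PF x))) x :=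
            h2.mul hωd.hasFDerivAt
          have hval : ∀ j : Fin n, fderiv ℝ uu x (Pi.single j 1)
              = ω x * ((- fderiv ℝ PF x (Pi.single j 1) : ℝ) : ℂ) := by
            intro j
            rw [hprod.fderiv]
            simp only [ContinuousLinearMap.add_apply, ContinuousLinearMap.smul_apply,
              ContinuousLinearMap.coe_comp', Function.comp_apply,
              ContinuousLinearMap.coe_sub', Pi.sub_apply, ContinuousLinearMap.zero_apply,
              Complex.ofRealCLM_apply, smul_eq_mul, hP1x]
            push_cast
            ring
          refine Finset.sum_le_sum fun j _ => ?_
          rw [hval j, norm_mul, hω1x, one_mul]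
          rw [Complex.norm_real]
          rw [Real.norm_eq_abs, sq_abs, neg_pow]
          simp
        · have hg1 : (0:ℝ) ≤ g₁ x := Finset.sum_nonneg fun j _ => sq_nonneg _
          refine le_trans (le_of_eq ?_) hg1
          rw [fderiv_zero_of_not_differentiableAt hud]
          simp
    · -- off F
      have hxQF : x ∈ Q \ F := ⟨hxQ, hxF⟩
      have hind : (Q \ F).indicator g₂ x = g₂ x := Set.indicator_of_mem hxQF _
      rw [hind]
      have hxQe : x ∈ Q \ e := hQFe hxQF
      have hω1x : ‖ω x‖ = 1 := hω1 x hxQe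
      have hωx0 : ω x ≠ 0 := by intro h; rw [h] at hω1x; simp at hω1x
      have hωd : DifferentiableAt ℝ ω x := hωdiff x hxQe
      have hPFd : DifferentiableAt ℝ PF x := hPdiff x hxF
      -- derivative of gsq vanishes
      have hre : HasFDerivAt (fun y => (ω y).re) (Complex.reCLM.comp (fderiv ℝ ω x)) x :=
        (Complex.reCLM.hasFDerivAt).comp x hωd.hasFDerivAt
      have him : HasFDerivAt (fun y => (ω y).im) (Complex.imCLM.comp (fderiv ℝ ω x)) x :=
        (Complex.imCLM.hasFDerivAt).comp x hωd.hasFDerivAt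
      have hgsqd : HasFDerivAt gsq
          (((ω x).re • (Complex.reCLM.comp (fderiv ℝ ω x))
              + (ω x).re • (Complex.reCLM.comp (fderiv ℝ ω x)))
            + ((ω x).im • (Complex.imCLM.comp (fderiv ℝ ω x))
              + (ω x).im • (Complex.imCLM.comp (fderiv ℝ ω x)))) x :=
        ((hre.mul hre).add (him.mul him)).sub_const 1
      have hD0 := hgsqd.fderiv
      rw [hgx hxQF] at hD0
      have horth : ∀ j : Fin n,
          (ω x).re * (fderiv ℝ ω x (Pi.single j 1)).re
            + (ω x).im * (fderiv ℝ ω x (Pi.single j 1)).im = 0 := by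
        intro j
        have := congrFun (congrArg (fun T => ((T : (Fin n → ℝ) →L[ℝ] ℝ) : (Fin n → ℝ) → ℝ))
          hD0.symm) (Pi.single j 1)
        simp only [ContinuousLinearMap.add_apply, ContinuousLinearMap.smul_apply,
          ContinuousLinearMap.comp_apply, Complex.reCLM_apply, Complex.imCLM_apply,
          ContinuousLinearMap.zero_apply, smul_eq_mul] at this
        linarith
      -- algebra on each coordinate
      have hcc : ω x * (starRingEnd ℂ) (ω x) = 1 := by
        rw [Complex.mul_conj]
        norm_cast
        rw [Complex.normSq_eq_norm_sq, hω1x]; norm_num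
      have hterm : ∀ j : Fin n,
          ‖fderiv ℝ uu x (Pi.single j 1) + Complex.I * (a x j) * uu x‖ ^ 2
            ≤ (fderiv ℝ PF x (Pi.single j 1)) ^ 2
              + (((fderiv ℝ ω x (Pi.single j 1)) / (Complex.I * ω x)).re + a x j) ^ 2 := by
        intro j
        set w : ℂ := fderiv ℝ ω x (Pi.single j 1) with hwdef
        set p : ℝ := fderiv ℝ PF x (Pi.single j 1) with hpdef
        set A : ℝ := a x j with hAdef
        set r : ℝ := ((starRingEnd ℂ) (ω x) * w).im with hrdef
        have hconjre : ((starRingEnd ℂ) (ω x) * w).re = 0 := by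
          have := horth j
          simp only [Complex.mul_re, Complex.conj_re, Complex.conj_im, ← hwdef] at this ⊢
          linarith
        have hcw : (starRingEnd ℂ) (ω x) * w = Complex.I * (r : ℂ) := by
          apply Complex.ext
          · simp [hconjre]
          · simp [hrdef]
        have hw : w = Complex.I * (r : ℂ) * ω x := by
          calc w = (ω x * (starRingEnd ℂ) (ω x)) * w := by rw [hcc, one_mul]
          _ = ω x * ((starRingEnd ℂ) (ω x) * w) := by ring
          _ = ω x * (Complex.I * (r : ℂ)) := by rw [hcw]
          _ = Complex.I * (r : ℂ) * ω x := by ring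
        have ht : (w / (Complex.I * ω x)).re = r := by
          have hIc : Complex.I * ω x ≠ 0 := mul_ne_zero Complex.I_ne_zero hωx0
          have : w / (Complex.I * ω x) = (r : ℂ) := by
            rw [hw]; field_simp
          rw [this, Complex.ofReal_re]
        -- derivative of uu
        have h1 : HasFDerivAt (fun y => (1 : ℝ) - PF y) (0 - fderiv ℝ PF x) x :=
          (hasFDerivAt_const 1 x).sub hPFd.hasFDerivAt
        have h2 : HasFDerivAt (fun y => ((1 - PF y : ℝ) : ℂ))
            (Complex.ofRealCLM.comp (0 - fderiv ℝ PF x)) x :=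
          (Complex.ofRealCLM.hasFDerivAt).comp x h1
        have hprod : HasFDerivAt uu
            (((1 - PF x : ℝ) : ℂ) • fderiv ℝ ω x
              + (ω x) • (Complex.ofRealCLM.comp (0 - fderiv ℝ PF x))) x :=
          h2.mul hωd.hasFDerivAt
        have hval : fderiv ℝ uu x (Pi.single j 1)
            = ((1 - PF x : ℝ) : ℂ) * w + ω x * ((-p : ℝ) : ℂ) := by
          rw [hprod.fderiv]
          simp only [ContinuousLinearMap.add_apply, ContinuousLinearMap.smul_apply,
            ContinuousLinearMap.coe_comp', Function.comp_apply,
            ContinuousLinearMap.coe_sub', Pi.sub_apply, ContinuousLinearMap.zero_apply,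
            Complex.ofRealCLM_apply, smul_eq_mul, hwdef, hpdef]
          push_cast
          ring
        have hz : fderiv ℝ uu x (Pi.single j 1) + Complex.I * (A : ℂ) * uu x
            = (((-p : ℝ) : ℂ) + Complex.I * (((1 - PF x) * (r + A) : ℝ) : ℂ)) * ω x := by
          rw [hval, hw, huu]
          push_cast
          ring
        rw [hz, norm_mul, hω1x, mul_one, norm_sq_ofReal_add_I_mul, ht]
        have hP01 : 0 ≤ 1 - PF x := by linarith [hP1 x]
        have hP11 : 1 - PF x ≤ 1 := by linarith [hP0 x]
        have hsq : (1 - PF x) ^ 2 ≤ 1 := by nlinarith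
        have h5 : ((1 - PF x) * (r + A)) ^ 2 ≤ (r + A) ^ 2 := by
          rw [mul_pow]
          calc (1 - PF x) ^ 2 * (r + A) ^ 2 ≤ 1 * (r + A) ^ 2 :=
                mul_le_mul_of_nonneg_right hsq (sq_nonneg _)
          _ = (r + A) ^ 2 := one_mul _
        have h6 : (-p) ^ 2 = p ^ 2 := neg_sq p
        linarith
      have hVterm : V x * ‖uu x‖ ^ 2 ≤ V x := by
        have : ‖uu x‖ ^ 2 = (1 - PF x) ^ 2 := by
          rw [huu]
          simp only [norm_mul, Complex.norm_real, hω1x, mul_one, Real.norm_eq_abs, sq_abs]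
        rw [this]
        have hP01 : 0 ≤ 1 - PF x := by linarith [hP1 x]
        have hP11 : 1 - PF x ≤ 1 := by linarith [hP0 x]
        calc V x * (1 - PF x) ^ 2 ≤ V x * 1 := by
              apply mul_le_mul_of_nonneg_left _ (hV0 x)
              nlinarith
        _ = V x := mul_one _
      calc (∑ j : Fin n, ‖fderiv ℝ uu x (Pi.single j 1) + Complex.I * (a x j) * uu x‖ ^ 2)
            + V x * ‖uu x‖ ^ 2
          ≤ (∑ j : Fin n, ((fderiv ℝ PF x (Pi.single j 1)) ^ 2
              + (((fderiv ℝ ω x (Pi.single j 1)) / (Complex.I * ω x)).re + a x j) ^ 2)) + V x :=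
            add_le_add (Finset.sum_le_sum fun j _ => hterm j) hVterm
        _ = g₁ x + g₂ x := by
            rw [Finset.sum_add_distrib, hg₁, hg₂]; ring
  -- put everything together
  calc (∫ x in Q, ((∑ j : Fin n,
          ‖fderiv ℝ uu x (Pi.single j 1) + Complex.I * (a x j) * uu x‖ ^ 2)
        + V x * ‖uu x‖ ^ 2))
      ≤ ∫ x in Q, (g₁ x + (Q \ F).indicator g₂ x) := by
        apply integral_mono_of_nonneg
        · exact Filter.Eventually.of_forall fun x =>
            add_nonneg (Finset.sum_nonneg fun j _ => sq_nonneg _)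
              (mul_nonneg (hV0 x) (sq_nonneg _))
        · exact (hcapInt.integrableOn).add ((hRHSint.integrable_indicator hQFm).integrableOn)
        · exact (ae_restrict_of_ae hae).mp
            ((ae_restrict_mem hQm).mono fun x hxQ h => key x h hxQ)
    _ = (∫ x in Q, g₁ x) + ∫ x in Q, (Q \ F).indicator g₂ x :=
        integral_add (hcapInt.integrableOn) ((hRHSint.integrable_indicator hQFm).integrableOn)
    _ ≤ capF + ∫ x in Q \ F, g₂ x := by
        have h1 : ∫ x in Q, g₁ x ≤ capF := by
          rw [hcap]
          exact setIntegral_le_integral hcapInt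
            (Filter.Eventually.of_forall fun x => Finset.sum_nonneg fun j _ => sq_nonneg _)
        have h2 : ∫ x in Q, (Q \ F).indicator g₂ x = ∫ x in Q \ F, g₂ x := by
          rw [setIntegral_indicator hQFm, Set.inter_eq_self_of_subset_right Set.diff_subset]
        rw [h2]
        linarith
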